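/- Let {(w_ξ, ψ_ξ)} be a finite weighted family of unit vectors in ℂ^d with weights w_ξ ≥ 0, not all zero. Then Σ_{ξ,η} w_ξ w_η |⟨ψ_ξ|ψ_η⟩|⁴ ≥ (2/(d(d+1)))·(Σ_ξ w_ξ)², with equality if and only if Σ_ξ w_ξ (|ψ_ξ⟩⟨ψ_ξ|)^{⊗2} = (2 Σ_ξ w_ξ / (d(d+1))) P₊, i.e., the family is a weighted 2-design. -/

import Mathlib

open Matrix Kronecker ComplexOrder BigOperators

/-- The swap operator `V` on `ℂ^d ⊗ ℂ^d`, `V(x ⊗ y) = y ⊗ x`. -/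
noncomputable def swapOp (d : ℕ) : Matrix (Fin d × Fin d) (Fin d × Fin d) ℂ :=
  fun p q => if p.1 = q.2 ∧ p.2 = q.1 then 1 else 0

/-- Projector onto the symmetric subspace of `ℂ^d ⊗ ℂ^d`. -/
noncomputable def Pplus (d : ℕ) : Matrix (Fin d × Fin d) (Fin d × Fin d) ℂ :=
  (2 : ℂ)⁻¹ • (1 + swapOp d)

/-- Projector onto the antisymmetric subspace of `ℂ^d ⊗ ℂ^d`. -/
noncomputable def Pminus (d : ℕ) : Matrix (Fin d × Fin d) (Fin d × Fin d) ℂ :=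
  (2 : ℂ)⁻¹ • (1 - swapOp d)

/-- Partial trace over the first tensor factor. -/
noncomputable def ptr1 {d : ℕ} (Q : Matrix (Fin d × Fin d) (Fin d × Fin d) ℂ) :
    Matrix (Fin d) (Fin d) ℂ :=
  fun j k => ∑ i, Q (i, j) (i, k)

/-- Partial trace over the second tensor factor. -/
noncomputable def ptr2 {d : ℕ} (Q : Matrix (Fin d × Fin d) (Fin d × Fin d) ℂ) :
    Matrix (Fin d) (Fin d) ℂ :=
  fun i j => ∑ k, Q (i, k) (j, k)

section stmt10aux

open Finset

private lemma stmt10_swap4 {α β γ δ : Type*} [Fintype α] [Fintype β] [Fintype γ] [Fintype δ]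
    (f : α → β → γ → δ → ℂ) :
    ∑ a, ∑ b, ∑ c, ∑ e, f a b c e = ∑ c, ∑ e, ∑ a, ∑ b, f a b c e := by
  have := Finset.sum_comm (s := (Finset.univ : Finset (α × β)))
    (t := (Finset.univ : Finset (γ × δ))) (f := fun ab cd => f ab.1 ab.2 cd.1 cd.2)
  simpa [Fintype.sum_prod_type] using this

private lemma stmt10_factor4 {d : ℕ} (c : ℂ) (f g h e : Fin d → ℂ) :
    ∑ i, ∑ j, ∑ k, ∑ l, c * (e i * h j * (g k * f l))
      = c * ((∑ i, f i) * (∑ j, g j) * ((∑ k, h k) * (∑ l, e l))) := by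
  simp only [Finset.sum_mul, Finset.mul_sum]
  repeat' (refine Finset.sum_congr rfl fun _ _ => ?_)
  ring

private lemma stmt10_factor2 {d : ℕ} (c : ℂ) (f g : Fin d → ℂ) :
    ∑ i, ∑ j, c * (g i * f j) = c * ((∑ i, f i) * (∑ j, g j)) := by
  simp only [Finset.sum_mul, Finset.mul_sum]
  repeat' (refine Finset.sum_congr rfl fun _ _ => ?_)
  ring

private lemma stmt10_Pplus_apply (d : ℕ) : ∀ p q : Fin d × Fin d,
    Pplus d p q = 2⁻¹ * ((if p = q then 1 else 0) + (if q = (p.2, p.1) then 1 else 0)) := by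
  rintro ⟨a, b⟩ ⟨x, y⟩
  have : (a = y ∧ b = x) ↔ ((x, y) = (b, a)) := by
    constructor
    · rintro ⟨rfl, rfl⟩; rfl
    · intro h; obtain ⟨h1, h2⟩ := Prod.mk.injEq .. ▸ h
      simp_all
  simp [Pplus, swapOp, Matrix.add_apply, Matrix.one_apply, Matrix.smul_apply, smul_eq_mul, this]

private lemma stmt10_collapseL {d : ℕ} (M : Matrix (Fin d × Fin d) (Fin d × Fin d) ℂ) :
    ∑ p, ∑ q, (2⁻¹ * ((if p = q then (1:ℂ) else 0) + (if q = (p.2, p.1) then 1 else 0))) * M p q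
      = 2⁻¹ * ((∑ p, M p p) + ∑ p : Fin d × Fin d, M p (p.2, p.1)) := by
  simp only [add_mul, mul_add, ite_mul, mul_ite, one_mul, zero_mul, mul_zero, mul_one,
    Finset.sum_add_distrib, Finset.sum_ite_eq, Finset.sum_ite_eq', Finset.mem_univ, if_true]
  rw [Finset.mul_sum, Finset.mul_sum]

private lemma stmt10_collapseR {d : ℕ} (M : Matrix (Fin d × Fin d) (Fin d × Fin d) ℂ) :
    ∑ p, ∑ q, M p q * (2⁻¹ * ((if p = q then (1:ℂ) else 0) + (if q = (p.2, p.1) then 1 else 0)))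
      = 2⁻¹ * ((∑ p, M p p) + ∑ p : Fin d × Fin d, M p (p.2, p.1)) := by
  have : ∀ p q : Fin d × Fin d,
      M p q * (2⁻¹ * ((if p = q then (1:ℂ) else 0) + (if q = (p.2, p.1) then 1 else 0)))
      = (2⁻¹ * ((if p = q then (1:ℂ) else 0) + (if q = (p.2, p.1) then 1 else 0))) * M p q :=
    fun p q => mul_comm _ _
  simp only [this]
  exact stmt10_collapseL M

private lemma stmt10_diag_count (d : ℕ) :
    ∑ p : Fin d × Fin d, (if p = (p.2, p.1) then (1:ℂ) else 0) = (d : ℂ) := by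
  rw [Fintype.sum_prod_type]
  have hcond : ∀ i j : Fin d, (((i, j) : Fin d × Fin d) = (((i, j) : Fin d × Fin d).2, ((i, j) : Fin d × Fin d).1)) ↔ (i = j) := by
    intro i j
    constructor
    · intro h
      exact (Prod.mk.injEq .. ▸ h).1
    · rintro rfl; rfl
  calc ∑ i, ∑ j, (if ((i, j) : Fin d × Fin d) = (((i, j) : Fin d × Fin d).2, ((i, j) : Fin d × Fin d).1) then (1:ℂ) else 0)
      = ∑ i, ∑ j, (if i = j then (1:ℂ) else 0) := by
        refine Finset.sum_congr rfl fun i _ => Finset.sum_congr rfl fun j _ => ?_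
        exact if_congr (hcond i j) rfl rfl
    _ = (d : ℂ) := by simp

end stmt10aux

/-- For a finite weighted family of unit vectors in `ℂ^d` with nonnegative
weights, not all zero, `Σ_{ξ,η} w_ξ w_η |⟨ψ_ξ|ψ_η⟩|⁴ ≥ (2/(d(d+1)))(Σ_ξ w_ξ)²`, with equality
iff the family is a weighted 2-design. -/
theorem stmt10 {d n : ℕ} (hd : 0 < d) (ψ : Fin n → Fin d → ℂ) (w : Fin n → ℝ)
    (hw : ∀ ξ, 0 ≤ w ξ) (hne : ∃ ξ, w ξ ≠ 0)
    (hunit : ∀ ξ, star (ψ ξ) ⬝ᵥ ψ ξ = 1) :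
    (2 / (d * (d + 1)) : ℝ) * (∑ ξ, w ξ) ^ 2
      ≤ ∑ ξ, ∑ η, w ξ * w η * ‖star (ψ ξ) ⬝ᵥ ψ η‖ ^ 4 ∧
    (∑ ξ, ∑ η, w ξ * w η * ‖star (ψ ξ) ⬝ᵥ ψ η‖ ^ 4
        = (2 / (d * (d + 1)) : ℝ) * (∑ ξ, w ξ) ^ 2
      ↔ ∑ ξ, (w ξ : ℂ) • (vecMulVec (ψ ξ) (star (ψ ξ)) ⊗ₖ vecMulVec (ψ ξ) (star (ψ ξ)))
          = (((2 * ∑ ξ, w ξ) / (d * (d + 1)) : ℝ) : ℂ) • Pplus d) := by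
  classical
  set W : ℝ := ∑ ξ, w ξ with hW
  set D : ℝ := (d : ℝ) * ((d : ℝ) + 1) with hDdef
  have hD : 0 < D := by
    have : (0:ℝ) < d := by exact_mod_cast hd
    positivity
  set g : Fin n → Fin n → ℂ := fun ξ η => star (ψ ξ) ⬝ᵥ ψ η with hg
  set M : Matrix (Fin d × Fin d) (Fin d × Fin d) ℂ :=
    ∑ ξ, (w ξ : ℂ) • (vecMulVec (ψ ξ) (star (ψ ξ)) ⊗ₖ vecMulVec (ψ ξ) (star (ψ ξ))) with hMdef
  set SR : ℝ := ∑ ξ, ∑ η, w ξ * w η * ‖g ξ η‖ ^ 4 with hSR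
  -- basic facts
  have hgdef : ∀ ξ η, g ξ η = ∑ i, (starRingEnd ℂ) (ψ ξ i) * ψ η i := by
    intro ξ η
    simp [hg, dotProduct, Complex.star_def]
  have hconj : ∀ ξ η : Fin n, ∑ i, ψ ξ i * (starRingEnd ℂ) (ψ η i) = (starRingEnd ℂ) (g ξ η) := by
    intro a b
    rw [hgdef, map_sum]
    exact Finset.sum_congr rfl fun i _ => by rw [_root_.map_mul, Complex.conj_conj]
  have hu : ∀ ξ, ∑ i, ψ ξ i * (starRingEnd ℂ) (ψ ξ i) = 1 := by
    intro ξ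
    rw [hconj ξ ξ]
    have : g ξ ξ = 1 := hunit ξ
    rw [this, RingHom.map_one]
  -- entry formula for M
  have hM : ∀ p q : Fin d × Fin d, M p q
      = ∑ ξ, (w ξ : ℂ) * (ψ ξ p.1 * (starRingEnd ℂ) (ψ ξ q.1) * (ψ ξ p.2 * (starRingEnd ℂ) (ψ ξ q.2))) := by
    intro p q
    simp [hMdef, Matrix.sum_apply, Matrix.smul_apply, kroneckerMap_apply, vecMulVec_apply,
      smul_eq_mul, Complex.star_def, mul_assoc, mul_comm, mul_left_comm]
  -- the four Hilbert–Schmidt pairings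
  have h1 : ∑ p, ∑ q, (starRingEnd ℂ) (M p q) * M p q
      = ∑ ξ, ∑ η, (w ξ:ℂ) * (w η:ℂ) *
          ((starRingEnd ℂ) (g ξ η) * (starRingEnd ℂ) (g ξ η) * (g ξ η * g ξ η)) := by
    have step : ∀ ξ η : Fin n, (∑ p : Fin d × Fin d, ∑ q : Fin d × Fin d,
        (starRingEnd ℂ) ((w ξ:ℂ) * (ψ ξ p.1 * (starRingEnd ℂ) (ψ ξ q.1) * (ψ ξ p.2 * (starRingEnd ℂ) (ψ ξ q.2)))) *
        ((w η:ℂ) * (ψ η p.1 * (starRingEnd ℂ) (ψ η q.1) * (ψ η p.2 * (starRingEnd ℂ) (ψ η q.2)))))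
        = (w ξ:ℂ) * (w η:ℂ) * ((starRingEnd ℂ) (g ξ η) * (starRingEnd ℂ) (g ξ η) * (g ξ η * g ξ η)) := by
      intro ξ η
      calc (∑ p : Fin d × Fin d, ∑ q : Fin d × Fin d,
          (starRingEnd ℂ) ((w ξ:ℂ) * (ψ ξ p.1 * (starRingEnd ℂ) (ψ ξ q.1) * (ψ ξ p.2 * (starRingEnd ℂ) (ψ ξ q.2)))) *
          ((w η:ℂ) * (ψ η p.1 * (starRingEnd ℂ) (ψ η q.1) * (ψ η p.2 * (starRingEnd ℂ) (ψ η q.2)))))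
          = ∑ i, ∑ j, ∑ k, ∑ l, ((w ξ:ℂ) * (w η:ℂ)) *
              (((starRingEnd ℂ) (ψ ξ i) * ψ η i) * (((starRingEnd ℂ) (ψ ξ j) * ψ η j)) *
               ((ψ ξ k * (starRingEnd ℂ) (ψ η k)) * (ψ ξ l * (starRingEnd ℂ) (ψ η l)))) := by
            simp only [Fintype.sum_prod_type]
            repeat' (refine Finset.sum_congr rfl fun _ _ => ?_)
            simp only [_root_.map_mul, Complex.conj_ofReal, Complex.conj_conj]
            ring
        _ = (w ξ:ℂ) * (w η:ℂ) * ((starRingEnd ℂ) (g ξ η) * (starRingEnd ℂ) (g ξ η) * (g ξ η * g ξ η)) := by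
            rw [stmt10_factor4 ((w ξ:ℂ) * (w η:ℂ)) (fun t => ψ ξ t * (starRingEnd ℂ) (ψ η t))
              (fun t => ψ ξ t * (starRingEnd ℂ) (ψ η t)) (fun t => (starRingEnd ℂ) (ψ ξ t) * ψ η t)
              (fun t => (starRingEnd ℂ) (ψ ξ t) * ψ η t), hconj ξ η, ← hgdef ξ η]
    calc ∑ p, ∑ q, (starRingEnd ℂ) (M p q) * M p q
        = ∑ p : Fin d × Fin d, ∑ q : Fin d × Fin d, ∑ ξ, ∑ η,
            (starRingEnd ℂ) ((w ξ:ℂ) * (ψ ξ p.1 * (starRingEnd ℂ) (ψ ξ q.1) * (ψ ξ p.2 * (starRingEnd ℂ) (ψ ξ q.2)))) *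
            ((w η:ℂ) * (ψ η p.1 * (starRingEnd ℂ) (ψ η q.1) * (ψ η p.2 * (starRingEnd ℂ) (ψ η q.2)))) := by
          refine Finset.sum_congr rfl fun p _ => Finset.sum_congr rfl fun q _ => ?_
          rw [hM, map_sum, Finset.sum_mul_sum]
      _ = ∑ ξ, ∑ η, ∑ p : Fin d × Fin d, ∑ q : Fin d × Fin d,
            (starRingEnd ℂ) ((w ξ:ℂ) * (ψ ξ p.1 * (starRingEnd ℂ) (ψ ξ q.1) * (ψ ξ p.2 * (starRingEnd ℂ) (ψ ξ q.2)))) *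
            ((w η:ℂ) * (ψ η p.1 * (starRingEnd ℂ) (ψ η q.1) * (ψ η p.2 * (starRingEnd ℂ) (ψ η q.2)))) :=
          stmt10_swap4 _
      _ = _ := Finset.sum_congr rfl fun ξ _ => Finset.sum_congr rfl fun η _ => step ξ η
  -- traces of M
  have htr1 : ∑ p : Fin d × Fin d, M p p = (W:ℂ) := by
    simp only [hM]
    rw [Finset.sum_comm]
    have : ∀ ξ : Fin n, (∑ p : Fin d × Fin d,
        (w ξ : ℂ) * (ψ ξ p.1 * (starRingEnd ℂ) (ψ ξ p.1) * (ψ ξ p.2 * (starRingEnd ℂ) (ψ ξ p.2)))) = (w ξ:ℂ) := by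
      intro ξ
      rw [Fintype.sum_prod_type]
      rw [stmt10_factor2 ((w ξ:ℂ)) (fun t => ψ ξ t * (starRingEnd ℂ) (ψ ξ t))
        (fun t => ψ ξ t * (starRingEnd ℂ) (ψ ξ t)), hu ξ, one_mul, mul_one]
    rw [Finset.sum_congr rfl fun ξ _ => this ξ, hW]
    push_cast
    rfl
  have htr2 : ∑ p : Fin d × Fin d, M p (p.2, p.1) = (W:ℂ) := by
    simp only [hM]
    rw [Finset.sum_comm]
    have : ∀ ξ : Fin n, (∑ p : Fin d × Fin d,
        (w ξ : ℂ) * (ψ ξ p.1 * (starRingEnd ℂ) (ψ ξ p.2) * (ψ ξ p.2 * (starRingEnd ℂ) (ψ ξ p.1)))) = (w ξ:ℂ) := by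
      intro ξ
      rw [Fintype.sum_prod_type]
      have : ∀ i j : Fin d, (w ξ : ℂ) * (ψ ξ i * (starRingEnd ℂ) (ψ ξ j) * (ψ ξ j * (starRingEnd ℂ) (ψ ξ i)))
          = (w ξ : ℂ) * ((ψ ξ i * (starRingEnd ℂ) (ψ ξ i)) * (ψ ξ j * (starRingEnd ℂ) (ψ ξ j))) := by
        intro i j; ring
      simp only [this]
      rw [stmt10_factor2 ((w ξ:ℂ)) (fun t => ψ ξ t * (starRingEnd ℂ) (ψ ξ t))
        (fun t => ψ ξ t * (starRingEnd ℂ) (ψ ξ t)), hu ξ, one_mul, mul_one]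
    rw [Finset.sum_congr rfl fun ξ _ => this ξ, hW]
    push_cast
    rfl
  -- conj of Pplus entries
  have hPconj : ∀ p q : Fin d × Fin d, (starRingEnd ℂ) (Pplus d p q) = Pplus d p q := by
    intro p q
    rw [stmt10_Pplus_apply]
    simp [apply_ite (starRingEnd ℂ), map_ofNat]
  have h2 : ∑ p, ∑ q, (starRingEnd ℂ) (Pplus d p q) * M p q = (W:ℂ) := by
    simp only [hPconj]
    simp only [stmt10_Pplus_apply]
    rw [stmt10_collapseL M, htr1, htr2]
    ring
  have h3 : ∑ p, ∑ q, (starRingEnd ℂ) (M p q) * Pplus d p q = (W:ℂ) := by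
    simp only [stmt10_Pplus_apply]
    rw [stmt10_collapseR (fun p q => (starRingEnd ℂ) (M p q))]
    have e1 : ∑ p : Fin d × Fin d, (starRingEnd ℂ) (M p p) = (W:ℂ) := by
      rw [← map_sum, htr1, Complex.conj_ofReal]
    have e2 : ∑ p : Fin d × Fin d, (starRingEnd ℂ) (M p (p.2, p.1)) = (W:ℂ) := by
      rw [← map_sum, htr2, Complex.conj_ofReal]
    rw [e1, e2]
    ring
  have h4 : ∑ p, ∑ q, (starRingEnd ℂ) (Pplus d p q) * Pplus d p q = ((D / 2 : ℝ) : ℂ) := by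
    have e0 : ∑ p, ∑ q, (starRingEnd ℂ) (Pplus d p q) * Pplus d p q
        = 2⁻¹ * ((∑ p, Pplus d p p) + ∑ p : Fin d × Fin d, Pplus d p (p.2, p.1)) := by
      have : ∀ p q : Fin d × Fin d, (starRingEnd ℂ) (Pplus d p q) * Pplus d p q
          = (2⁻¹ * ((if p = q then (1:ℂ) else 0) + (if q = (p.2, p.1) then 1 else 0))) * Pplus d p q := by
        intro p q
        rw [hPconj, stmt10_Pplus_apply]
      simp only [this]
      exact stmt10_collapseL (Pplus d)
    have e1 : ∑ p : Fin d × Fin d, Pplus d p p = 2⁻¹ * ((d:ℂ) * d + d) := by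
      have : ∀ p : Fin d × Fin d, Pplus d p p
          = 2⁻¹ * (1 + if p = (p.2, p.1) then (1:ℂ) else 0) := by
        intro p
        rw [stmt10_Pplus_apply]
        simp
      simp only [this]
      rw [← Finset.mul_sum, Finset.sum_add_distrib, stmt10_diag_count, Finset.sum_const,
        Finset.card_univ]
      simp [Fintype.card_prod]
    have e2 : ∑ p : Fin d × Fin d, Pplus d p (p.2, p.1) = 2⁻¹ * ((d:ℂ) * d + d) := by
      have : ∀ p : Fin d × Fin d, Pplus d p (p.2, p.1)
          = 2⁻¹ * ((if p = (p.2, p.1) then (1:ℂ) else 0) + 1) := by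
        intro p
        rw [stmt10_Pplus_apply]
        simp
      simp only [this]
      rw [← Finset.mul_sum, Finset.sum_add_distrib, stmt10_diag_count, Finset.sum_const,
        Finset.card_univ]
      simp [Fintype.card_prod]
      ring
    rw [e0, e1, e2, hDdef]
    push_cast
    ring
  -- assemble
  set cr : ℝ := 2 * W / D with hcr
  set N : Matrix (Fin d × Fin d) (Fin d × Fin d) ℂ := M - (cr:ℂ) • Pplus d with hN
  have hNe : ∀ p q : Fin d × Fin d, N p q = M p q - (cr:ℂ) * Pplus d p q := by
    intro p q
    simp [hN, Matrix.sub_apply, Matrix.smul_apply, smul_eq_mul]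
  have hexp : ∑ p, ∑ q, (starRingEnd ℂ) (N p q) * N p q
      = (∑ p, ∑ q, (starRingEnd ℂ) (M p q) * M p q)
        - (cr:ℂ) * (∑ p, ∑ q, (starRingEnd ℂ) (Pplus d p q) * M p q)
        - (cr:ℂ) * (∑ p, ∑ q, (starRingEnd ℂ) (M p q) * Pplus d p q)
        + (cr:ℂ)^2 * (∑ p, ∑ q, (starRingEnd ℂ) (Pplus d p q) * Pplus d p q) := by
    have hterm : ∀ p q : Fin d × Fin d, (starRingEnd ℂ) (N p q) * N p q
        = (starRingEnd ℂ) (M p q) * M p q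
          - (cr:ℂ) * ((starRingEnd ℂ) (Pplus d p q) * M p q)
          - (cr:ℂ) * ((starRingEnd ℂ) (M p q) * Pplus d p q)
          + (cr:ℂ)^2 * ((starRingEnd ℂ) (Pplus d p q) * Pplus d p q) := by
      intro p q
      rw [hNe, map_sub, _root_.map_mul, Complex.conj_ofReal]
      ring
    simp only [hterm, Finset.sum_add_distrib, Finset.sum_sub_distrib, ← Finset.mul_sum]
  have habs : ∀ z : ℂ, ((‖z‖ : ℝ) : ℂ)^4
      = (starRingEnd ℂ) z * (starRingEnd ℂ) z * (z * z) := by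
    intro z
    have hsq : ((‖z‖ : ℝ) : ℂ)^2 = z * (starRingEnd ℂ) z := by
      rw [Complex.mul_conj]
      norm_cast
      exact Complex.sq_norm z
    calc ((‖z‖ : ℝ) : ℂ)^4 = (((‖z‖ : ℝ) : ℂ)^2)^2 := by ring
      _ = (z * (starRingEnd ℂ) z)^2 := by rw [hsq]
      _ = (starRingEnd ℂ) z * (starRingEnd ℂ) z * (z * z) := by ring
  have hScast : ((SR : ℝ) : ℂ)
      = ∑ ξ, ∑ η, (w ξ:ℂ) * (w η:ℂ) *
          ((starRingEnd ℂ) (g ξ η) * (starRingEnd ℂ) (g ξ η) * (g ξ η * g ξ η)) := by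
    rw [hSR]
    push_cast
    refine Finset.sum_congr rfl fun ξ _ => Finset.sum_congr rfl fun η _ => ?_
    rw [habs]
  have hsum : ∑ p, ∑ q, (starRingEnd ℂ) (N p q) * N p q = ((SR - 2 / D * W^2 : ℝ) : ℂ) := by
    rw [hexp, h1, ← hScast, h2, h3, h4]
    have hD0 : (D:ℝ) ≠ 0 := ne_of_gt hD
    rw [hcr]
    push_cast
    field_simp
    ring
  have hreal : ∑ p, ∑ q, Complex.normSq (N p q) = SR - 2 / D * W^2 := by
    have hcast2 : ((∑ p, ∑ q, Complex.normSq (N p q) : ℝ) : ℂ)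
        = ∑ p, ∑ q, (starRingEnd ℂ) (N p q) * N p q := by
      rw [Complex.ofReal_sum]
      refine Finset.sum_congr rfl fun p _ => ?_
      rw [Complex.ofReal_sum]
      refine Finset.sum_congr rfl fun q _ => ?_
      rw [Complex.normSq_eq_conj_mul_self]
    exact Complex.ofReal_inj.mp (hcast2.trans hsum)
  have hpos : 0 ≤ ∑ p, ∑ q, Complex.normSq (N p q) :=
    Finset.sum_nonneg fun p _ => Finset.sum_nonneg fun q _ => Complex.normSq_nonneg _
  constructor
  · linarith [hreal, hpos]
  · constructor
    · intro hEq
      have hz : ∑ p, ∑ q, Complex.normSq (N p q) = 0 := by rw [hreal]; linarith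
      have h0 : ∀ p q : Fin d × Fin d, Complex.normSq (N p q) = 0 := by
        intro p q
        have hp := (Finset.sum_eq_zero_iff_of_nonneg
          (fun p _ => Finset.sum_nonneg fun q _ => Complex.normSq_nonneg (N p q))).mp hz p
          (Finset.mem_univ p)
        exact (Finset.sum_eq_zero_iff_of_nonneg
          (fun q _ => Complex.normSq_nonneg (N p q))).mp hp q (Finset.mem_univ q)
      have hN0 : N = 0 := by
        ext p q
        exact Complex.normSq_eq_zero.mp (h0 p q)
      rw [hN] at hN0
      exact sub_eq_zero.mp hN0
    · intro hdes
      have hN0 : N = 0 := by rw [hN, hdes, sub_self]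
      have hz : ∑ p, ∑ q, Complex.normSq (N p q) = 0 := by simp [hN0]
      rw [hz] at hreal
      linarith
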